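/- For k = m + n - 2ℓ with 0 ≤ ℓ ≤ min(m,n), the bidifferential operator R_{m,n}^k := Rest_{z=w} ∘ Σ_{j=0}^{ℓ} (-1)^{ℓ-j} [(m+j-ℓ)!(n-j)!]/[j!(m-ℓ)!(ℓ-j)!(n-ℓ)!] ∂^ℓ/(∂z^{ℓ-j} ∂w^j) maps Pol_m[z] ⊗ Pol_n[w] to Pol_k[z] and is a nonzero sl(2,ℂ)-homomorphism from V_m ⊗ V_n to V_k, where V_m is realized on polynomials of degree ≤ m. -/

import Mathlib

open scoped TensorProduct
open Polynomial

noncomputable section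

/-- Differentiation `d/dz` as an endomorphism of `ℂ[z]`. -/
def Dop : Module.End ℂ (Polynomial ℂ) := Polynomial.derivative

/-- Multiplication by `z` as an endomorphism of `ℂ[z]`. -/
def Mz : Module.End ℂ (Polynomial ℂ) := LinearMap.mulLeft ℂ (Polynomial.X)

/-- The action of `H` on `Pol_m[z]`: `m - 2z d/dz`. -/
def Hop (m : ℕ) : Module.End ℂ (Polynomial ℂ) := (m:ℂ) • 1 - (2:ℂ) • (Mz ∘ₗ Dop)

/-- The action of `X` on `Pol_m[z]`: `-d/dz`. -/
def Xop : Module.End ℂ (Polynomial ℂ) := -Dop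

/-- The action of `Y` on `Pol_m[z]`: `-mz + z² d/dz`. -/
def Yop (m : ℕ) : Module.End ℂ (Polynomial ℂ) := -((m:ℂ) • Mz) + (Mz ∘ₗ Mz ∘ₗ Dop)

/-- The coefficient `(-1)^(ℓ-j) (m+j-ℓ)!(n-j)! / (j!(m-ℓ)!(ℓ-j)!(n-ℓ)!)`. -/
def coefRC (m n l j : ℕ) : ℂ :=
  (-1:ℂ)^(l-j) * ((Nat.factorial (m+j-l) : ℂ)) * ((Nat.factorial (n-j) : ℂ)) /
    ((Nat.factorial j : ℂ) * (Nat.factorial (m-l) : ℂ) *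
     (Nat.factorial (l-j) : ℂ) * (Nat.factorial (n-l) : ℂ))

/-- The finite-dimensional Rankin–Cohen operator, as a bilinear map:
`R_{m,n}^k(F,G) = Σ_j c_j · F^{(ℓ-j)}(z) G^{(j)}(z)` (restriction to `w = z` of the
bidifferential operator). -/
def RCbil (m n l : ℕ) : Polynomial ℂ →ₗ[ℂ] Polynomial ℂ →ₗ[ℂ] Polynomial ℂ :=
  ∑ j ∈ Finset.range (l+1),
    coefRC m n l j •
      (((LinearMap.mul ℂ (Polynomial ℂ)) ∘ₗ (Dop ^ (l - j))).compl₂ (Dop ^ j))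

lemma RCbil_apply (m n l : ℕ) (F G : Polynomial ℂ) :
    RCbil m n l F G = ∑ j ∈ Finset.range (l+1),
      coefRC m n l j • (derivative^[l-j] F * derivative^[j] G) := by
  simp [RCbil, Module.End.pow_apply, Dop, LinearMap.mul_apply']

lemma Hop_apply (k : ℕ) (P : Polynomial ℂ) :
    Hop k P = (k:ℂ) • P - (2:ℂ) • (X * derivative P) := rfl

lemma Xop_apply (P : Polynomial ℂ) : Xop P = -derivative P := rfl

lemma Yop_apply (m : ℕ) (P : Polynomial ℂ) :
    Yop m P = -((m:ℂ) • (X * P)) + X * (X * derivative P) := rfl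

lemma iter_add (a : ℕ) (F G : Polynomial ℂ) :
    derivative^[a] (F + G) = derivative^[a] F + derivative^[a] G := by
  induction a generalizing F G with
  | zero => simp
  | succ s ih => simp [Function.iterate_succ_apply, ih]

lemma smul_iter_pred (a : ℕ) (F : Polynomial ℂ) :
    (a:ℂ) • derivative^[a-1] (derivative F) = (a:ℂ) • derivative^[a] F := by
  cases a with
  | zero => simp
  | succ s => rw [Nat.add_sub_cancel, ← Function.iterate_succ_apply]

lemma iter_X_mul (a : ℕ) (F : Polynomial ℂ) :
    derivative^[a] (X * F) = X * derivative^[a] F + (a:ℂ) • derivative^[a-1] F := by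
  induction a generalizing F with
  | zero => simp
  | succ s ih =>
      rw [Function.iterate_succ_apply, derivative_mul, derivative_X, one_mul,
        iter_add, ih (derivative F), ← Function.iterate_succ_apply,
        smul_iter_pred, Nat.add_sub_cancel]
      push_cast
      rw [add_smul, one_smul]
      abel

lemma iter_X_der (a : ℕ) (F : Polynomial ℂ) :
    derivative^[a] (X * derivative F) = X * derivative^[a+1] F + (a:ℂ) • derivative^[a] F := by
  rw [iter_X_mul, ← Function.iterate_succ_apply, smul_iter_pred]

lemma iter_X2_der (a : ℕ) (F : Polynomial ℂ) :
    derivative^[a] (X * (X * derivative F)) =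
      X * (X * derivative^[a+1] F) + ((2*a : ℂ)) • (X * derivative^[a] F)
        + ((a:ℂ) * ((a:ℂ)-1)) • derivative^[a-1] F := by
  rw [iter_X_mul, iter_X_der]
  cases a with
  | zero => simp
  | succ s =>
      rw [Nat.add_sub_cancel, iter_X_der]
      simp only [smul_eq_C_mul, map_add, map_mul, map_sub, map_one, map_natCast, map_ofNat]
      push_cast
      ring

lemma cast_k (m n l k : ℕ) (hk : m + n = k + 2*l) : (k:ℂ) = (m:ℂ) + n - 2*l := by
  have : ((m+n:ℕ):ℂ) = ((k+2*l:ℕ):ℂ) := by rw [hk]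
  push_cast at this
  linear_combination -this

lemma X_int (m n l : ℕ) (F G : Polynomial ℂ) :
    Xop (RCbil m n l F G) = RCbil m n l (Xop F) G + RCbil m n l F (Xop G) := by
  simp only [RCbil_apply, Xop_apply]
  rw [← Finset.sum_add_distrib, map_sum, ← Finset.sum_neg_distrib]
  refine Finset.sum_congr rfl fun j hj => ?_
  rw [derivative_smul, derivative_mul]
  simp only [iterate_derivative_neg, ← Function.iterate_succ_apply,
    ← Function.iterate_succ_apply']
  simp only [smul_eq_C_mul]
  ring

lemma H_int (m n l k : ℕ) (hk : m + n = k + 2*l) (F G : Polynomial ℂ) :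
    Hop k (RCbil m n l F G) = RCbil m n l (Hop m F) G + RCbil m n l F (Hop n G) := by
  have hk' := cast_k m n l k hk
  simp only [RCbil_apply]
  rw [← Finset.sum_add_distrib, map_sum]
  refine Finset.sum_congr rfl fun j hj => ?_
  rw [Finset.mem_range] at hj
  have hjl : j ≤ l := by omega
  have cj : ((l-j:ℕ):ℂ) = (l:ℂ) - j := by push_cast [Nat.cast_sub hjl]; ring
  rw [Hop_apply k, Hop_apply m, Hop_apply n]
  rw [show ((m:ℂ) • F - (2:ℂ) • (X * derivative F)) =
      (m:ℂ) • F + (-(2:ℂ)) • (X * derivative F) by rw [neg_smul]; ring,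
    show ((n:ℂ) • G - (2:ℂ) • (X * derivative G)) =
      (n:ℂ) • G + (-(2:ℂ)) • (X * derivative G) by rw [neg_smul]; ring]
  rw [iter_add, iter_add, iterate_derivative_smul, iterate_derivative_smul,
    iterate_derivative_smul, iterate_derivative_smul, iter_X_der, iter_X_der]
  rw [derivative_smul, derivative_mul]
  simp only [← Function.iterate_succ_apply, ← Function.iterate_succ_apply']
  rw [cj, hk']
  simp only [smul_eq_C_mul, map_add, map_mul, map_sub, map_one, map_natCast, map_ofNat, map_neg]
  ring
lemma fact_ne (a : ℕ) : ((a.factorial : ℂ)) ≠ 0 := by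
  exact_mod_cast Nat.cast_ne_zero.mpr (Nat.factorial_ne_zero a)

lemma coef_rec (m n l j : ℕ) (hj : j < l) (hm : l ≤ m) (hn : l ≤ n) :
    coefRC m n l j * ((l:ℂ)-j) * ((l:ℂ)-j-1-(m:ℂ)) +
      coefRC m n l (j+1) * ((j:ℂ)+1) * ((j:ℂ)-(n:ℂ)) = 0 := by
  unfold coefRC
  have e1 : m + (j+1) - l = (m + j - l) + 1 := by omega
  have e2 : n - j = (n - (j+1)) + 1 := by omega
  have e3 : l - j = (l - (j+1)) + 1 := by omega
  rw [e1, e2, e3, Nat.factorial_succ, Nat.factorial_succ, Nat.factorial_succ,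
    Nat.factorial_succ (j:ℕ)]
  have c1 : ((m + j - l : ℕ) : ℂ) = (m:ℂ) + j - l := by
    push_cast [Nat.cast_sub (show l ≤ m + j by omega)]; ring
  have c2 : ((n - (j+1) : ℕ) : ℂ) = (n:ℂ) - j - 1 := by
    push_cast [Nat.cast_sub (show j+1 ≤ n by omega)]; ring
  have c3 : ((l - (j+1) : ℕ) : ℂ) = (l:ℂ) - j - 1 := by
    push_cast [Nat.cast_sub (show j+1 ≤ l by omega)]; ring
  rw [pow_succ]
  push_cast [c1, c2, c3]
  have h1 := fact_ne (m + j - l)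
  have h2 := fact_ne (n - (j+1))
  have h3 := fact_ne (l - (j+1))
  have h4 := fact_ne j
  have h5 := fact_ne (m - l)
  have h6 := fact_ne (n - l)
  have h7 : (l:ℂ) - j - 1 + 1 ≠ 0 := by
    have : (l:ℂ) ≠ (j:ℂ) := by exact_mod_cast Nat.ne_of_gt hj
    intro h; apply this; linear_combination h
  have h8 : (j:ℂ) + 1 ≠ 0 := by
    have : ((j+1:ℕ):ℂ) ≠ 0 := Nat.cast_ne_zero.mpr (Nat.succ_ne_zero j)
    push_cast at this; exact this
  have hd1 : (Nat.factorial j : ℂ) * (Nat.factorial (m-l) : ℂ) *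
      (((l:ℂ)-j-1+1) * (Nat.factorial (l-(j+1)) : ℂ)) * (Nat.factorial (n-l) : ℂ) ≠ 0 :=
    mul_ne_zero (mul_ne_zero (mul_ne_zero h4 h5) (mul_ne_zero h7 h3)) h6
  have hd2 : ((j:ℂ)+1) * (Nat.factorial j : ℂ) * (Nat.factorial (m-l) : ℂ) *
      (Nat.factorial (l-(j+1)) : ℂ) * (Nat.factorial (n-l) : ℂ) ≠ 0 :=
    mul_ne_zero (mul_ne_zero (mul_ne_zero (mul_ne_zero h8 h4) h5) h3) h6
  simp only [div_mul_eq_mul_div]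
  rw [div_add_div _ _ hd1 hd2, _root_.div_eq_zero_iff]
  left
  ring

lemma anomaly (m n l : ℕ) (hm : l ≤ m) (hn : l ≤ n) (F G : Polynomial ℂ) :
    ∑ j ∈ Finset.range (l+1),
      ((coefRC m n l j * ((l:ℂ)-j) * ((l:ℂ)-j-1-(m:ℂ))) •
          (derivative^[l-j-1] F * derivative^[j] G)
        + (coefRC m n l j * (j:ℂ) * ((j:ℂ)-1-(n:ℂ))) •
          (derivative^[l-j] F * derivative^[j-1] G)) = 0 := by
  rw [Finset.sum_add_distrib]
  rw [Finset.sum_range_succ, Finset.sum_range_succ' (fun j =>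
    (coefRC m n l j * (j:ℂ) * ((j:ℂ)-1-(n:ℂ))) •
      (derivative^[l-j] F * derivative^[j-1] G))]
  simp only [sub_self, mul_zero, zero_mul, zero_smul, add_zero, Nat.cast_zero, mul_zero,
    zero_mul, zero_smul]
  rw [← Finset.sum_add_distrib]
  refine Finset.sum_eq_zero fun j hj => ?_
  rw [Finset.mem_range] at hj
  simp only [Nat.add_sub_cancel, ← Nat.sub_sub]
  rw [← add_smul]
  have hs : coefRC m n l j * ((l:ℂ)-j) * ((l:ℂ)-j-1-(m:ℂ))
      + coefRC m n l (j+1) * ((j+1:ℕ):ℂ) * (((j+1:ℕ):ℂ)-1-(n:ℂ)) = 0 := by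
    push_cast
    linear_combination coef_rec m n l j hj hm hn
  rw [hs, zero_smul]

lemma Y_int (m n l k : ℕ) (hm : l ≤ m) (hn : l ≤ n) (hk : m + n = k + 2*l)
    (F G : Polynomial ℂ) :
    Yop k (RCbil m n l F G) = RCbil m n l (Yop m F) G + RCbil m n l F (Yop n G) := by
  have hk' := cast_k m n l k hk
  simp only [RCbil_apply]
  rw [← Finset.sum_add_distrib, map_sum]
  have main : (∑ j ∈ Finset.range (l+1),
      (coefRC m n l j • (derivative^[l-j] (Yop m F) * derivative^[j] G) +
        coefRC m n l j • (derivative^[l-j] F * derivative^[j] (Yop n G))))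
      - (∑ j ∈ Finset.range (l+1),
        Yop k (coefRC m n l j • (derivative^[l-j] F * derivative^[j] G)))
      = ∑ j ∈ Finset.range (l+1),
      ((coefRC m n l j * ((l:ℂ)-j) * ((l:ℂ)-j-1-(m:ℂ))) •
          (derivative^[l-j-1] F * derivative^[j] G)
        + (coefRC m n l j * (j:ℂ) * ((j:ℂ)-1-(n:ℂ))) •
          (derivative^[l-j] F * derivative^[j-1] G)) := by
    rw [← Finset.sum_sub_distrib]
    refine Finset.sum_congr rfl fun j hj => ?_
    rw [Finset.mem_range] at hj
    have hjl : j ≤ l := by omega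
    have cj : ((l-j:ℕ):ℂ) = (l:ℂ) - j := by push_cast [Nat.cast_sub hjl]; ring
    rw [Yop_apply m, Yop_apply n, Yop_apply k]
    rw [iter_add, iter_add, iterate_derivative_neg, iterate_derivative_neg,
      iterate_derivative_smul, iterate_derivative_smul,
      iter_X2_der, iter_X2_der, iter_X_mul, iter_X_mul]
    rw [derivative_smul, derivative_mul]
    simp only [← Function.iterate_succ_apply, ← Function.iterate_succ_apply']
    rw [cj, hk']
    simp only [smul_eq_C_mul, map_add, map_mul, map_sub, map_one, map_natCast,
      map_ofNat, map_neg]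
    ring
  have van := anomaly m n l hm hn F G
  rw [van] at main
  linear_combination -main

lemma degree_diff_lt (l : ℕ) (P : Polynomial ℂ) (h : P.degree < (l+1 : ℕ)) :
    (P - P.comp (X + C 1)).degree < (l : ℕ) := by
  rcases eq_or_ne P 0 with rfl | hP
  · simp only [zero_comp, sub_zero, degree_zero]
    exact WithBot.bot_lt_coe l
  · have hq : (X + C (1:ℂ)).natDegree = 1 := natDegree_X_add_C 1
    have hnd : (P.comp (X + C 1)).natDegree = P.natDegree := by
      rw [natDegree_comp, hq, mul_one]
    have hlc : (P.comp (X + C 1)).leadingCoeff = P.leadingCoeff := by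
      rw [leadingCoeff_comp (by rw [hq]; exact one_ne_zero),
        (monic_X_add_C (1:ℂ)).leadingCoeff, one_pow, mul_one]
    have hcomp_ne : P.comp (X + C 1) ≠ 0 := by
      intro h0
      apply hP
      rw [← leadingCoeff_eq_zero, ← hlc, h0, leadingCoeff_zero]
    have hdeg : P.degree = (P.comp (X + C 1)).degree := by
      rw [degree_eq_natDegree hP, degree_eq_natDegree hcomp_ne, hnd]
    have hlt := degree_sub_lt hdeg hP hlc.symm
    have hPl : P.degree ≤ (l : ℕ) := by
      rw [degree_eq_natDegree hP] at h ⊢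
      exact_mod_cast Nat.lt_succ_iff.mp (by exact_mod_cast h)
    exact lt_of_lt_of_le hlt hPl

lemma findiff (l : ℕ) (P : Polynomial ℂ) (h : P.degree < (l : ℕ)) :
    ∑ j ∈ Finset.range (l+1), (-1:ℂ)^j * (l.choose j : ℂ) * P.eval (j:ℂ) = 0 := by
  induction l generalizing P with
  | zero =>
      have hP : P = 0 := by
        rw [← degree_eq_bot]
        exact Nat.WithBot.lt_zero_iff.mp (by exact_mod_cast h)
      simp [hP]
  | succ l ih =>
      have key := ih (P - P.comp (X + C 1)) (degree_diff_lt l P h)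
      rw [Finset.sum_range_succ'
        (fun j => (-1:ℂ)^j * ((l+1).choose j : ℂ) * P.eval (j:ℂ)) (l+1)]
      have hg : (∑ i ∈ Finset.range (l+1),
            (-1:ℂ)^(i+1) * (l.choose (i+1) : ℂ) * P.eval ((i+1:ℕ):ℂ))
            + (-1:ℂ)^0 * (l.choose 0 : ℂ) * P.eval ((0:ℕ):ℂ)
          = ∑ j ∈ Finset.range (l+1), (-1:ℂ)^j * (l.choose j : ℂ) * P.eval (j:ℂ) := by
        rw [← Finset.sum_range_succ'
          (fun j => (-1:ℂ)^j * (l.choose j : ℂ) * P.eval (j:ℂ)) (l+1),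
          Finset.sum_range_succ]
        simp [Nat.choose_succ_self]
      have hsplit : (∑ i ∈ Finset.range (l+1),
            (-1:ℂ)^(i+1) * ((l+1).choose (i+1) : ℂ) * P.eval ((i+1:ℕ):ℂ))
          = (∑ i ∈ Finset.range (l+1),
              (-1:ℂ)^(i+1) * (l.choose i : ℂ) * P.eval ((i+1:ℕ):ℂ))
            + ∑ i ∈ Finset.range (l+1),
              (-1:ℂ)^(i+1) * (l.choose (i+1) : ℂ) * P.eval ((i+1:ℕ):ℂ) := by
        rw [← Finset.sum_add_distrib]
        refine Finset.sum_congr rfl fun i _ => ?_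
        rw [Nat.choose_succ_succ]
        push_cast
        ring
      simp only [Nat.choose_zero_right] at hg ⊢
      rw [hsplit, add_assoc, hg]
      rw [← key, ← Finset.sum_add_distrib]
      refine Finset.sum_congr rfl fun i _ => ?_
      simp only [eval_sub, eval_comp, eval_add, eval_X, eval_C]
      push_cast
      ring

lemma subA (m l p j : ℕ) (hm : l ≤ m) (hj : j ≤ l) (hp : p ≤ m) :
    ((m+j-l).factorial : ℂ) * (p.descFactorial (l-j) : ℂ) =
      (p.factorial : ℂ) * ∏ r ∈ Finset.range (m-p), ((j:ℂ) + ((m:ℂ) - l - r)) := by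
  by_cases hc : l - j ≤ p
  · have hprod : ∀ r ∈ Finset.range (m-p),
        ((j:ℂ) + ((m:ℂ) - l - r)) = ((m - l + j - r : ℕ) : ℂ) := by
      intro r hr
      rw [Finset.mem_range] at hr
      have h1 : r ≤ m - l + j := by omega
      push_cast [Nat.cast_sub h1, Nat.cast_sub hm]
      ring
    rw [Finset.prod_congr rfl hprod, ← Nat.cast_prod, ← Nat.descFactorial_eq_prod_range,
      ← Nat.cast_mul, ← Nat.cast_mul]
    congr 1
    have h1 := Nat.factorial_mul_descFactorial hc
    have h2 := Nat.factorial_mul_descFactorial (show m - p ≤ m - l + j by omega)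
    have e1 : m - l + j - (m - p) = p - (l - j) := by omega
    have e2 : m + j - l = m - l + j := by omega
    rw [e1] at h2
    apply Nat.eq_of_mul_eq_mul_right (Nat.factorial_pos (p - (l-j)))
    calc (m+j-l).factorial * p.descFactorial (l-j) * (p-(l-j)).factorial
        = (m+j-l).factorial * ((p-(l-j)).factorial * p.descFactorial (l-j)) := by ring
      _ = (m+j-l).factorial * p.factorial := by rw [h1]
      _ = p.factorial * ((p-(l-j)).factorial * (m-l+j).descFactorial (m-p)) := by
          rw [h2, e2]; ring
      _ = p.factorial * (m-l+j).descFactorial (m-p) * (p-(l-j)).factorial := by ring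
  · have h0 : p.descFactorial (l-j) = 0 := Nat.descFactorial_eq_zero_iff_lt.mpr (by omega)
    rw [h0, Nat.cast_zero, mul_zero]
    have hmem : m - l + j ∈ Finset.range (m-p) := Finset.mem_range.mpr (by omega)
    rw [Finset.prod_eq_zero hmem (by
      push_cast [Nat.cast_sub hm]
      ring), mul_zero]

lemma subB (n l q j : ℕ) (hn : l ≤ n) (hj : j ≤ l) (hq : q ≤ n) :
    ((n-j).factorial : ℂ) * (q.descFactorial j : ℂ) =
      (q.factorial : ℂ) * ∏ r ∈ Finset.range (n-q), (((n:ℂ) - r) - (j:ℂ)) := by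
  by_cases hc : j ≤ q
  · have hprod : ∀ r ∈ Finset.range (n-q),
        (((n:ℂ) - r) - (j:ℂ)) = ((n - j - r : ℕ) : ℂ) := by
      intro r hr
      rw [Finset.mem_range] at hr
      have h1 : r ≤ n - j := by omega
      push_cast [Nat.cast_sub h1, Nat.cast_sub (show j ≤ n by omega)]
      ring
    rw [Finset.prod_congr rfl hprod, ← Nat.cast_prod, ← Nat.descFactorial_eq_prod_range,
      ← Nat.cast_mul, ← Nat.cast_mul]
    congr 1
    have h1 := Nat.factorial_mul_descFactorial (show j ≤ q from hc)
    have h2 := Nat.factorial_mul_descFactorial (show n - q ≤ n - j by omega)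
    have e1 : n - j - (n - q) = q - j := by omega
    rw [e1] at h2
    apply Nat.eq_of_mul_eq_mul_right (Nat.factorial_pos (q - j))
    calc (n-j).factorial * q.descFactorial j * (q-j).factorial
        = (n-j).factorial * ((q-j).factorial * q.descFactorial j) := by ring
      _ = (n-j).factorial * q.factorial := by rw [h1]
      _ = q.factorial * ((q-j).factorial * (n-j).descFactorial (n-q)) := by rw [h2]; ring
      _ = q.factorial * (n-j).descFactorial (n-q) * (q-j).factorial := by ring
  · have h0 : q.descFactorial j = 0 := Nat.descFactorial_eq_zero_iff_lt.mpr (by omega)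
    rw [h0, Nat.cast_zero, mul_zero]
    have hmem : n - j ∈ Finset.range (n-q) := Finset.mem_range.mpr (by omega)
    rw [Finset.prod_eq_zero hmem (by
      push_cast [Nat.cast_sub (show j ≤ n by omega)]
      ring), mul_zero]

lemma key_vanish (m n l p q : ℕ) (hm : l ≤ m) (hn : l ≤ n) (hp : p ≤ m) (hq : q ≤ n)
    (hbig : m + n < p + q + l) :
    ∑ j ∈ Finset.range (l+1),
      coefRC m n l j * (p.descFactorial (l-j) : ℂ) * (q.descFactorial j : ℂ) = 0 := by
  set P : Polynomial ℂ :=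
    (∏ r ∈ Finset.range (m-p), (X + C ((m:ℂ) - l - r))) *
      (∏ r ∈ Finset.range (n-q), (C ((n:ℂ) - r) - X)) with hP
  have hdeg : P.degree < (l : ℕ) := by
    have h1 : P.natDegree ≤ (m-p) + (n-q) := by
      apply le_trans (natDegree_mul_le)
      gcongr
      · exact le_trans (natDegree_prod_le _ _) (by
          apply le_trans (Finset.sum_le_card_nsmul _ _ 1 ?_) (by simp)
          intro r _
          compute_degree)
      · exact le_trans (natDegree_prod_le _ _) (by
          apply le_trans (Finset.sum_le_card_nsmul _ _ 1 ?_) (by simp)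
          intro r _
          compute_degree)
    have h2 : (m-p) + (n-q) < l := by omega
    calc P.degree ≤ (P.natDegree : WithBot ℕ) := degree_le_natDegree
      _ < (l : ℕ) := by exact_mod_cast lt_of_le_of_lt h1 h2
  have hfd := findiff l P hdeg
  have heval : ∀ j : ℕ, P.eval (j:ℂ) =
      (∏ r ∈ Finset.range (m-p), ((j:ℂ) + ((m:ℂ) - l - r))) *
        ∏ r ∈ Finset.range (n-q), (((n:ℂ) - r) - (j:ℂ)) := by
    intro j
    simp only [hP, eval_mul, eval_prod, eval_add, eval_sub, eval_X, eval_C]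
  have hterm : ∀ j ∈ Finset.range (l+1),
      coefRC m n l j * (p.descFactorial (l-j) : ℂ) * (q.descFactorial j : ℂ)
        = ((-1:ℂ)^l * (p.factorial : ℂ) * (q.factorial : ℂ) /
            ((l.factorial : ℂ) * ((m-l).factorial : ℂ) * ((n-l).factorial : ℂ)))
          * ((-1:ℂ)^j * (l.choose j : ℂ) * P.eval (j:ℂ)) := by
    intro j hj
    rw [Finset.mem_range] at hj
    have hjl : j ≤ l := by omega
    have d1 := fact_ne j
    have d2 := fact_ne (m-l)
    have d3 := fact_ne (l-j)
    have d4 := fact_ne (n-l)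
    have d5 := fact_ne l
    have d6 := fact_ne (m+j-l)
    have d7 := fact_ne (n-j)
    have hsign : (-1:ℂ)^(l-j) = (-1:ℂ)^l * (-1:ℂ)^j := by
      have h1 : (-1:ℂ)^(l-j) * (-1:ℂ)^j = (-1:ℂ)^l := by
        rw [← pow_add]
        congr 1
        omega
      have h2 : (-1:ℂ)^j * (-1:ℂ)^j = 1 := by
        rw [← pow_add, ← two_mul, pow_mul]
        norm_num
      calc (-1:ℂ)^(l-j) = (-1:ℂ)^(l-j) * ((-1:ℂ)^j * (-1:ℂ)^j) := by rw [h2, mul_one]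
        _ = (-1:ℂ)^l * (-1:ℂ)^j := by rw [← mul_assoc, h1]
    have hchoose : (l.choose j : ℂ) = (l.factorial : ℂ) /
        ((j.factorial : ℂ) * ((l-j).factorial : ℂ)) := by
      have := congrArg (Nat.cast : ℕ → ℂ) (Nat.choose_mul_factorial_mul_factorial hjl)
      push_cast at this
      field_simp
      linear_combination this
    have hdp : (p.descFactorial (l-j) : ℂ) =
        (p.factorial : ℂ) * (∏ r ∈ Finset.range (m-p), ((j:ℂ) + ((m:ℂ) - l - r))) /
          ((m+j-l).factorial : ℂ) := by
      field_simp
      linear_combination subA m l p j hm hjl hp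
    have hdq : (q.descFactorial j : ℂ) =
        (q.factorial : ℂ) * (∏ r ∈ Finset.range (n-q), (((n:ℂ) - r) - (j:ℂ))) /
          ((n-j).factorial : ℂ) := by
      field_simp
      linear_combination subB n l q j hn hjl hq
    rw [heval j, coefRC, hdp, hdq, hsign, hchoose]
    field_simp
  rw [Finset.sum_congr rfl hterm, ← Finset.mul_sum, hfd, mul_zero]

lemma RC_monomial (m n l p q : ℕ) :
    RCbil m n l (X^p) (X^q) =
      (∑ j ∈ Finset.range (l+1),
        coefRC m n l j * (p.descFactorial (l-j) : ℂ) * (q.descFactorial j : ℂ)) •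
        X^(p+q-l) := by
  rw [RCbil_apply, Finset.sum_smul]
  refine Finset.sum_congr rfl fun j hj => ?_
  rw [Finset.mem_range] at hj
  rw [iterate_derivative_X_pow_eq_smul, iterate_derivative_X_pow_eq_smul,
    smul_mul_smul_comm, smul_smul, ← pow_add]
  by_cases hc : l - j ≤ p ∧ j ≤ q
  · have he : p - (l-j) + (q-j) = p+q-l := by omega
    rw [he, mul_assoc]
  · have h0 : (p.descFactorial (l-j) : ℂ) * (q.descFactorial j : ℂ) = 0 := by
      rcases not_and_or.mp hc with h | h
      · rw [show p.descFactorial (l-j) = 0 from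
          Nat.descFactorial_eq_zero_iff_lt.mpr (by omega), Nat.cast_zero, zero_mul]
      · rw [show q.descFactorial j = 0 from
          Nat.descFactorial_eq_zero_iff_lt.mpr (by omega), Nat.cast_zero, mul_zero]
    rw [mul_assoc, h0, mul_zero, zero_smul, zero_smul]

lemma RC_deg (m n l k : ℕ) (hm : l ≤ m) (hn : l ≤ n) (hk : m + n = k + 2*l)
    (F G : Polynomial ℂ) (hF : F.natDegree ≤ m) (hG : G.natDegree ≤ n) :
    (RCbil m n l F G).natDegree ≤ k := by
  have hFs : F = ∑ p ∈ Finset.range (m+1), F.coeff p • X^p := by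
    conv_lhs => rw [F.as_sum_range' (m+1) (by omega)]
    exact Finset.sum_congr rfl fun p _ => by rw [← C_mul_X_pow_eq_monomial, smul_eq_C_mul]
  have hGs : G = ∑ q ∈ Finset.range (n+1), G.coeff q • X^q := by
    conv_lhs => rw [G.as_sum_range' (n+1) (by omega)]
    exact Finset.sum_congr rfl fun q _ => by rw [← C_mul_X_pow_eq_monomial, smul_eq_C_mul]
  rw [hFs, hGs, map_sum]
  apply natDegree_sum_le_of_forall_le
  intro q hq
  rw [Finset.mem_range] at hq
  rw [map_smul, map_sum (RCbil m n l), LinearMap.sum_apply]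
  apply le_trans (natDegree_smul_le _ _)
  apply natDegree_sum_le_of_forall_le
  intro p hp
  rw [Finset.mem_range] at hp
  rw [map_smul, LinearMap.smul_apply]
  apply le_trans (natDegree_smul_le _ _)
  rw [RC_monomial]
  by_cases hcase : p + q - l ≤ k
  · exact le_trans (natDegree_smul_le _ _) (by rw [natDegree_X_pow]; exact hcase)
  · rw [key_vanish m n l p q hm hn (by omega) (by omega) (by omega), zero_smul]
    simp

lemma RC_ne (m n l : ℕ) (hm : l ≤ m) (hn : l ≤ n) : RCbil m n l 1 (X^l) ≠ 0 := by
  rw [RCbil_apply, Finset.sum_range_succ, Finset.sum_eq_zero (fun j hj => by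
    rw [Finset.mem_range] at hj
    rw [iterate_derivative_one (by omega : 0 < l - j), zero_mul, smul_zero]), zero_add]
  rw [Nat.sub_self, Function.iterate_zero_apply, one_mul,
    iterate_derivative_X_pow_eq_smul, Nat.descFactorial_self, Nat.sub_self, pow_zero]
  have hc : coefRC m n l l ≠ 0 := by
    unfold coefRC
    rw [Nat.sub_self]
    apply div_ne_zero
    · rw [pow_zero, one_mul]
      exact mul_ne_zero (fact_ne _) (fact_ne _)
    · repeat' apply mul_ne_zero
      all_goals exact fact_ne _
  exact smul_ne_zero hc (smul_ne_zero (fact_ne l) one_ne_zero)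

/-- **The finite-dimensional Rankin–Cohen operator is a nonzero symmetry breaking
operator `V_m ⊗ V_n → V_k`** for `k = m+n-2ℓ`, `0 ≤ ℓ ≤ min(m,n)`:
it maps `Pol_m[z] ⊗ Pol_n[w]` to `Pol_k[z]`, intertwines the `sl(2,ℂ)`-actions,
and is nonzero. -/
theorem RC_is_SBO (m n l k : ℕ) (hm : l ≤ m) (hn : l ≤ n) (hk : m + n = k + 2*l) :
    (∀ F G : Polynomial ℂ, F.natDegree ≤ m → G.natDegree ≤ n →
      (RCbil m n l F G).natDegree ≤ k) ∧
    (∀ F G : Polynomial ℂ, F.natDegree ≤ m → G.natDegree ≤ n →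
      Hop k (RCbil m n l F G) = RCbil m n l (Hop m F) G + RCbil m n l F (Hop n G) ∧
      Xop (RCbil m n l F G) = RCbil m n l (Xop F) G + RCbil m n l F (Xop G) ∧
      Yop k (RCbil m n l F G) = RCbil m n l (Yop m F) G + RCbil m n l F (Yop n G)) ∧
    (∃ F G : Polynomial ℂ, F.natDegree ≤ m ∧ G.natDegree ≤ n ∧ RCbil m n l F G ≠ 0) := by
  refine ⟨fun F G hF hG => RC_deg m n l k hm hn hk F G hF hG,
    fun F G hF hG => ⟨H_int m n l k hk F G, X_int m n l F G,
      Y_int m n l k hm hn hk F G⟩,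
    1, X^l, by simp, by rw [natDegree_X_pow]; exact hn, RC_ne m n l hm hn⟩
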